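/- arXiv:2407.16683 — 2 statements merged into one kernel-verified Lean document; each statement's English description precedes it below -/
import Mathlib

section
/- G_{V_↑} is the intersection of all finite-valued first-order Gödel logics: a sentence is valid in G_{V_↑} if and only if it is valid in G_{V_m} for every m ≥ 2. -/
namespace GodelPaper

/-- A first-order language: function and relation symbols of each arity. -/
structure Lang where
  Func : ℕ → Type
  Rel : ℕ → Type

/-- A Gödel set: a closed subset of [0,1] containing 0 and 1. -/
def GodelSet (V : Set ℝ) : Prop :=
  IsClosed V ∧ V ⊆ Set.Icc 0 1 ∧ (0:ℝ) ∈ V ∧ (1:ℝ) ∈ V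

/-- Terms with variables from `α`. -/
inductive Term (L : Lang) (α : Type) : Type
  | var : α → Term L α
  | func : ∀ {k}, L.Func k → (Fin k → Term L α) → Term L α

/-- A `V`-interpretation: nonempty domain, interpretation of function symbols,
and truth values in `V` for atomic sentences with parameters. -/
structure Interp (L : Lang) (V : Set ℝ) where
  Dom : Type
  dom_nonempty : Nonempty Dom
  funMap : ∀ {k}, L.Func k → (Fin k → Dom) → Dom
  relVal : ∀ {k}, L.Rel k → (Fin k → Dom) → ℝ
  relVal_mem : ∀ {k} (R : L.Rel k) (v : Fin k → Dom), relVal R v ∈ V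

def Term.eval {L : Lang} {V : Set ℝ} (I : Interp L V) {α : Type} (v : α → I.Dom) :
    Term L α → I.Dom
  | .var i => v i
  | .func f ts => I.funMap f fun j => Term.eval I v (ts j)

/-- Formulas of the Δ-extended language, with free variables among `Fin n`.
The quantifiers bind the *last* variable. Δ-free formulas (i.e. formulas of the
plain language) are singled out by the predicate `DeltaFree` below. -/
inductive Form (L : Lang) : ℕ → Type
  | falsum : ∀ {n}, Form L n
  | atom : ∀ {n k}, L.Rel k → (Fin k → Term L (Fin n)) → Form L n
  | conj : ∀ {n}, Form L n → Form L n → Form L n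
  | disj : ∀ {n}, Form L n → Form L n → Form L n
  | impl : ∀ {n}, Form L n → Form L n → Form L n
  | delta : ∀ {n}, Form L n → Form L n
  | all : ∀ {n}, Form L (n+1) → Form L n
  | ex : ∀ {n}, Form L (n+1) → Form L n

/-- The Gödel truth value of a formula under an interpretation and an
assignment of the free variables. -/
noncomputable def Form.val {L : Lang} {V : Set ℝ} (I : Interp L V) :
    ∀ {n}, Form L n → (Fin n → I.Dom) → ℝ
  | _, .falsum, _ => 0
  | _, .atom R ts, ρ => I.relVal R fun j => Term.eval I ρ (ts j)
  | _, .conj A B, ρ => min (Form.val I A ρ) (Form.val I B ρ)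
  | _, .disj A B, ρ => max (Form.val I A ρ) (Form.val I B ρ)
  | _, .impl A B, ρ => if Form.val I A ρ ≤ Form.val I B ρ then 1 else Form.val I B ρ
  | _, .delta A, ρ => if Form.val I A ρ = 1 then 1 else 0
  | _, .all A, ρ => sInf {v : ℝ | ∃ d : I.Dom, v = Form.val I A (Fin.snoc ρ d)}
  | _, .ex A, ρ => sSup {v : ℝ | ∃ d : I.Dom, v = Form.val I A (Fin.snoc ρ d)}

/-- The value of a sentence. -/
noncomputable def Form.sval {L : Lang} {V : Set ℝ} (I : Interp L V) (A : Form L 0) : ℝ :=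
  Form.val I A Fin.elim0

/-- `A` is valid in `G_V`. -/
def Valid {L : Lang} (V : Set ℝ) (A : Form L 0) : Prop :=
  ∀ I : Interp L V, Form.sval I A = 1

/-- `A` is 1-satisfiable in `G_V`. -/
def OneSat {L : Lang} (V : Set ℝ) (A : Form L 0) : Prop :=
  ∃ I : Interp L V, Form.sval I A = 1

/-- `A` is classically satisfiable: it takes value 1 under a `V`-interpretation
assigning only values in {0,1} to atomic sentences. -/
def ClassSat {L : Lang} (V : Set ℝ) (A : Form L 0) : Prop :=
  ∃ I : Interp L V,
    (∀ {k : ℕ} (R : L.Rel k) (v : Fin k → I.Dom), I.relVal R v = 0 ∨ I.relVal R v = 1) ∧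
    Form.sval I A = 1

/-- ¬A abbreviates A ⊃ ⊥. -/
def Form.not {L : Lang} {n : ℕ} (A : Form L n) : Form L n := Form.impl A Form.falsum

/-- A ↔ B abbreviates (A ⊃ B) ∧ (B ⊃ A). -/
def Form.iff {L : Lang} {n : ℕ} (A B : Form L n) : Form L n :=
  Form.conj (Form.impl A B) (Form.impl B A)

/-- Formulas of the plain language (no Δ). -/
def DeltaFree {L : Lang} : ∀ {n}, Form L n → Prop
  | _, .falsum => True
  | _, .atom _ _ => True
  | _, .conj A B => DeltaFree A ∧ DeltaFree B
  | _, .disj A B => DeltaFree A ∧ DeltaFree B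
  | _, .impl A B => DeltaFree A ∧ DeltaFree B
  | _, .delta _ => False
  | _, .all A => DeltaFree A
  | _, .ex A => DeltaFree A

/-- Quantifier-free formulas. -/
def QuantFree {L : Lang} : ∀ {n}, Form L n → Prop
  | _, .falsum => True
  | _, .atom _ _ => True
  | _, .conj A B => QuantFree A ∧ QuantFree B
  | _, .disj A B => QuantFree A ∧ QuantFree B
  | _, .impl A B => QuantFree A ∧ QuantFree B
  | _, .delta A => QuantFree A
  | _, .all _ => False
  | _, .ex _ => False

/-- Formulas containing no universal quantifier. -/
def AllFree {L : Lang} : ∀ {n}, Form L n → Prop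
  | _, .falsum => True
  | _, .atom _ _ => True
  | _, .conj A B => AllFree A ∧ AllFree B
  | _, .disj A B => AllFree A ∧ AllFree B
  | _, .impl A B => AllFree A ∧ AllFree B
  | _, .delta A => AllFree A
  | _, .all _ => False
  | _, .ex A => AllFree A

/-- Prenex formulas: a block of quantifiers followed by a quantifier-free matrix. -/
inductive IsPrenex {L : Lang} : ∀ {n}, Form L n → Prop
  | qf {n} {A : Form L n} : QuantFree A → IsPrenex A
  | all {n} {A : Form L (n+1)} : IsPrenex A → IsPrenex (Form.all A)
  | ex {n} {A : Form L (n+1)} : IsPrenex A → IsPrenex (Form.ex A)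

/-- Purely existential prenex formulas. -/
inductive ExPrenex {L : Lang} : ∀ {n}, Form L n → Prop
  | qf {n} {A : Form L n} : QuantFree A → ExPrenex A
  | ex {n} {A : Form L (n+1)} : ExPrenex A → ExPrenex (Form.ex A)

/-- The glued interpretation `I_ω`: atoms with value ≤ ω keep their value,
all other atoms get value 1. Same domain and function interpretations. -/
noncomputable def Interp.glue {L : Lang} {V : Set ℝ} (I : Interp L V) (ω : ℝ)
    (h1 : (1:ℝ) ∈ V) : Interp L V where
  Dom := I.Dom
  dom_nonempty := I.dom_nonempty
  funMap := fun {k} f v => I.funMap f v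
  relVal := fun {k} R v => if I.relVal R v ≤ ω then I.relVal R v else 1
  relVal_mem := fun {k} R v => by
    by_cases h : I.relVal R v ≤ ω
    · simpa [h] using I.relVal_mem R v
    · simpa [h] using h1

/-- The Gödel set `V_↑ = {1 - 1/k : k ≥ 1} ∪ {1}`. -/
def Vup : Set ℝ := {x : ℝ | ∃ k : ℕ, 1 ≤ k ∧ x = 1 - 1/(k:ℝ)} ∪ {1}

/-- The `m`-element Gödel set `V_m = {1 - 1/k : 1 ≤ k ≤ m-1} ∪ {1}`. -/
def Vfin (m : ℕ) : Set ℝ :=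
  {x : ℝ | ∃ k : ℕ, 1 ≤ k ∧ k ≤ m - 1 ∧ x = 1 - 1/(k:ℝ)} ∪ {1}

/-- Atomic formula built from a unary predicate. -/
def atom1 {L : Lang} (P : L.Rel 1) {n : ℕ} (t : Term L (Fin n)) : Form L n :=
  Form.atom P fun _ => t

/-- Atomic formula built from a 0-ary predicate (propositional atom). -/
def atom0 {L : Lang} (X : L.Rel 0) {n : ℕ} : Form L n :=
  Form.atom X fun i => i.elim0

def Term.rename {L : Lang} {α β : Type} (f : α → β) : Term L α → Term L β
  | .var i => .var (f i)
  | .func g ts => .func g fun j => Term.rename f (ts j)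

def Form.rename {L : Lang} : ∀ {m n}, (Fin m → Fin n) → Form L m → Form L n
  | _, _, _, .falsum => .falsum
  | _, _, f, .atom R ts => .atom R fun j => (ts j).rename f
  | _, _, f, .conj A B => .conj (A.rename f) (B.rename f)
  | _, _, f, .disj A B => .disj (A.rename f) (B.rename f)
  | _, _, f, .impl A B => .impl (A.rename f) (B.rename f)
  | _, _, f, .delta A => .delta (A.rename f)
  | _, _, f, .all A =>
      .all (A.rename (Fin.lastCases (Fin.last _) fun i => Fin.castSucc (f i)))
  | _, _, f, .ex A =>
      .ex (A.rename (Fin.lastCases (Fin.last _) fun i => Fin.castSucc (f i)))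

/-- Weakening: regard a formula with `n` free variables as one with `n+1`
free variables (not using the new last variable). -/
def Form.lift {L : Lang} {n : ℕ} (A : Form L n) : Form L (n+1) :=
  A.rename Fin.castSucc

def Term.subst {L : Lang} {α β : Type} (σ : α → Term L β) : Term L α → Term L β
  | .var i => σ i
  | .func g ts => .func g fun j => Term.subst σ (ts j)

def Form.subst {L : Lang} : ∀ {m n}, (Fin m → Term L (Fin n)) → Form L m → Form L n
  | _, _, _, .falsum => .falsum
  | _, _, σ, .atom R ts => .atom R fun j => (ts j).subst σ
  | _, _, σ, .conj A B => .conj (A.subst σ) (B.subst σ)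
  | _, _, σ, .disj A B => .disj (A.subst σ) (B.subst σ)
  | _, _, σ, .impl A B => .impl (A.subst σ) (B.subst σ)
  | _, _, σ, .delta A => .delta (A.subst σ)
  | _, _, σ, .all A =>
      .all (A.subst (Fin.lastCases (.var (Fin.last _))
        fun i => (σ i).rename Fin.castSucc))
  | _, _, σ, .ex A =>
      .ex (A.subst (Fin.lastCases (.var (Fin.last _))
        fun i => (σ i).rename Fin.castSucc))

/-- The language `L ∪ {f}` with one new function symbol of arity `a`. -/
def Lang.addFunc (L : Lang) (a : ℕ) : Lang where
  Func := fun k => L.Func k ⊕ PLift (k = a)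
  Rel := L.Rel

/-- The new function symbol of `L.addFunc a`. -/
def newFunc (L : Lang) (a : ℕ) : (L.addFunc a).Func a := Sum.inr ⟨rfl⟩

def Term.emb {L : Lang} {a : ℕ} {α : Type} : Term L α → Term (L.addFunc a) α
  | .var i => .var i
  | .func g ts => .func (Sum.inl g) fun j => Term.emb (ts j)

/-- Embedding of `L`-formulas into the language with the extra function symbol. -/
def Form.emb {L : Lang} {a : ℕ} : ∀ {n}, Form L n → Form (L.addFunc a) n
  | _, .falsum => .falsum
  | _, .atom R ts => .atom R fun j => (ts j).emb
  | _, .conj A B => .conj A.emb B.emb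
  | _, .disj A B => .disj A.emb B.emb
  | _, .impl A B => .impl A.emb B.emb
  | _, .delta A => .delta A.emb
  | _, .all A => .all A.emb
  | _, .ex A => .ex A.emb

/-- Prefix of `n` existential quantifiers (outermost quantifier binds variable 0). -/
def Form.exN {L : Lang} : ∀ n, Form L n → Form L 0
  | 0, A => A
  | n+1, A => Form.exN n (Form.ex A)

/-- Prefix of `n` universal quantifiers (outermost quantifier binds variable 0). -/
def Form.allN {L : Lang} : ∀ n, Form L n → Form L 0
  | 0, A => A
  | n+1, A => Form.allN n (Form.all A)

/-! ### Auxiliary machinery for stmt_4 -/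

lemma zero_mem_Vup : (0:ℝ) ∈ Vup := Or.inl ⟨1, le_refl 1, by norm_num⟩

lemma one_mem_Vup : (1:ℝ) ∈ Vup := Or.inr rfl

lemma Vup_subset_Icc : Vup ⊆ Set.Icc 0 1 := by
  rintro x (⟨k, hk, rfl⟩ | rfl)
  · have hk0 : (0:ℝ) < k := by exact_mod_cast hk
    constructor
    · have : (1:ℝ)/k ≤ 1 := by
        rw [div_le_one hk0]; exact_mod_cast hk
      linarith
    · have : (0:ℝ) < 1/k := by positivity
      linarith
  · exact ⟨zero_le_one, le_refl 1⟩

lemma Vfin_subset_Vup (m : ℕ) : Vfin m ⊆ Vup := by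
  rintro x (⟨k, hk1, _, rfl⟩ | rfl)
  · exact Or.inl ⟨k, hk1, rfl⟩
  · exact Or.inr rfl

lemma Vup_finite_below (c : ℝ) (hc : c < 1) : (Vup ∩ Set.Iic c).Finite := by
  refine Set.Finite.subset ((Set.finite_Iic ⌈1/(1-c)⌉₊).image (fun k : ℕ => 1 - 1/(k:ℝ))) ?_
  rintro x ⟨hxV, hxc⟩
  rcases hxV with ⟨k, hk, rfl⟩ | rfl
  · have hk0 : (0:ℝ) < k := by exact_mod_cast hk
    have hxc' : (1:ℝ) - c ≤ 1/k := by
      have : (1:ℝ) - 1/k ≤ c := hxc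
      linarith
    have h1 : (k:ℝ) * (1-c) ≤ 1 := by
      have := mul_le_mul_of_nonneg_left hxc' (le_of_lt hk0)
      have hkk : (k:ℝ) * (1/k) = 1 := by field_simp
      linarith
    have h2 : (k:ℝ) ≤ 1/(1-c) := (le_div_iff₀ (by linarith)).mpr h1
    have h3 : (k:ℝ) ≤ (⌈1/(1-c)⌉₊ : ℝ) := h2.trans (Nat.le_ceil _)
    exact ⟨k, by exact_mod_cast h3, rfl⟩
  · exact absurd hxc (not_le.mpr hc)

lemma Vup_bddBelow {S : Set ℝ} (hsub : S ⊆ Vup) : BddBelow S :=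
  ⟨0, fun x hx => (Vup_subset_Icc (hsub hx)).1⟩

lemma Vup_bddAbove {S : Set ℝ} (hsub : S ⊆ Vup) : BddAbove S :=
  ⟨1, fun x hx => (Vup_subset_Icc (hsub hx)).2⟩

lemma Vup_inf_mem {S : Set ℝ} (hsub : S ⊆ Vup) (hne : S.Nonempty) : sInf S ∈ S := by
  by_cases hS1 : ∃ s ∈ S, s < 1
  · obtain ⟨s, hsS, hs1⟩ := hS1
    set T := S ∩ Set.Iic s with hT
    have hTne : T.Nonempty := ⟨s, hsS, le_refl s⟩
    have hTfin : T.Finite := by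
      refine Set.Finite.subset (Vup_finite_below s hs1) ?_
      rintro x ⟨hxS, hxs⟩
      exact ⟨hsub hxS, hxs⟩
    have hTmem : sInf T ∈ T := hTne.csInf_mem hTfin
    have hle : sInf T ≤ s := csInf_le hTfin.bddBelow ⟨hsS, le_refl s⟩
    have heq : sInf S = sInf T := by
      apply le_antisymm
      · exact csInf_le_csInf (Vup_bddBelow hsub) hTne Set.inter_subset_left
      · refine le_csInf hne fun x hx => ?_
        rcases le_total x s with h | h
        · exact csInf_le hTfin.bddBelow ⟨hx, h⟩
        · exact hle.trans h
    rw [heq]; exact hTmem.1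
  · push_neg at hS1
    obtain ⟨s0, hs0⟩ := hne
    have hs01 : s0 = 1 := le_antisymm (Vup_subset_Icc (hsub hs0)).2 (hS1 s0 hs0)
    have : sInf S = s0 := by
      apply le_antisymm (csInf_le (Vup_bddBelow hsub) hs0)
      refine le_csInf ⟨s0, hs0⟩ fun x hx => ?_
      rw [hs01]; exact hS1 x hx
    rw [this]; exact hs0

lemma Vup_sup_mem {S : Set ℝ} (hsub : S ⊆ Vup) (hne : S.Nonempty) : sSup S ∈ Vup := by
  by_cases h1 : sSup S < 1
  · have hSfin : S.Finite := by
      refine Set.Finite.subset (Vup_finite_below (sSup S) h1) ?_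
      intro x hx
      exact ⟨hsub hx, le_csSup (Vup_bddAbove hsub) hx⟩
    exact hsub (hne.csSup_mem hSfin)
  · have hle : sSup S ≤ 1 := csSup_le hne fun x hx => (Vup_subset_Icc (hsub hx)).2
    have : sSup S = 1 := le_antisymm hle (not_lt.mp h1)
    rw [this]; exact one_mem_Vup

lemma val_mem_Vup {L : Lang} (I : Interp L Vup) :
    ∀ {n} (B : Form L n) (ρ : Fin n → I.Dom), Form.val I B ρ ∈ Vup := by
  intro n B
  induction B with
  | falsum => intro ρ; exact zero_mem_Vup
  | atom R ts => intro ρ; exact I.relVal_mem R _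
  | conj A B ihA ihB =>
    intro ρ
    simp only [Form.val]
    rcases le_total (Form.val I A ρ) (Form.val I B ρ) with h | h
    · rw [min_eq_left h]; exact ihA ρ
    · rw [min_eq_right h]; exact ihB ρ
  | disj A B ihA ihB =>
    intro ρ
    simp only [Form.val]
    rcases le_total (Form.val I A ρ) (Form.val I B ρ) with h | h
    · rw [max_eq_right h]; exact ihB ρ
    · rw [max_eq_left h]; exact ihA ρ
  | impl A B ihA ihB =>
    intro ρ
    simp only [Form.val]
    split_ifs
    · exact one_mem_Vup
    · exact ihB ρ
  | delta A ihA =>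
    intro ρ
    simp only [Form.val]
    split_ifs
    · exact one_mem_Vup
    · exact zero_mem_Vup
  | all A ih =>
    intro ρ
    simp only [Form.val]
    have hsub : {v : ℝ | ∃ d : I.Dom, v = Form.val I A (Fin.snoc ρ d)} ⊆ Vup := by
      rintro v ⟨d, rfl⟩; exact ih _
    obtain ⟨d⟩ := I.dom_nonempty
    exact hsub (Vup_inf_mem hsub ⟨_, d, rfl⟩)
  | ex A ih =>
    intro ρ
    simp only [Form.val]
    have hsub : {v : ℝ | ∃ d : I.Dom, v = Form.val I A (Fin.snoc ρ d)} ⊆ Vup := by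
      rintro v ⟨d, rfl⟩; exact ih _
    obtain ⟨d⟩ := I.dom_nonempty
    exact Vup_sup_mem hsub ⟨_, d, rfl⟩

/-- Re-typing an interpretation along a different Gödel set. -/
def Interp.retype {L : Lang} {V : Set ℝ} (I : Interp L V) (W : Set ℝ)
    (hmem : ∀ {k} (R : L.Rel k) (v : Fin k → I.Dom), I.relVal R v ∈ W) : Interp L W where
  Dom := I.Dom
  dom_nonempty := I.dom_nonempty
  funMap := fun {k} f v => I.funMap f v
  relVal := fun {k} R v => I.relVal R v
  relVal_mem := hmem

lemma eval_retype {L : Lang} {V : Set ℝ} (I : Interp L V) {W : Set ℝ}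
    (hmem : ∀ {k} (R : L.Rel k) (v : Fin k → I.Dom), I.relVal R v ∈ W)
    {α : Type} (v : α → I.Dom) (t : Term L α) :
    Term.eval (I.retype W hmem) v t = Term.eval I v t := by
  induction t with
  | var i => rfl
  | func f ts ih =>
    show I.funMap f _ = I.funMap f _
    congr 1
    funext j
    exact ih j

lemma val_retype {L : Lang} {V : Set ℝ} (I : Interp L V) {W : Set ℝ}
    (hmem : ∀ {k} (R : L.Rel k) (v : Fin k → I.Dom), I.relVal R v ∈ W) :
    ∀ {n} (B : Form L n) (ρ : Fin n → I.Dom),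
      Form.val (I.retype W hmem) B ρ = Form.val I B ρ := by
  intro n B
  induction B with
  | falsum => intro ρ; rfl
  | atom R ts =>
    intro ρ
    show I.relVal R _ = I.relVal R _
    congr 1
    funext j
    exact eval_retype I hmem ρ (ts j)
  | conj A B ihA ihB => intro ρ; simp only [Form.val, ihA, ihB]
  | disj A B ihA ihB => intro ρ; simp only [Form.val, ihA, ihB]
  | impl A B ihA ihB => intro ρ; simp only [Form.val, ihA, ihB]
  | delta A ihA => intro ρ; simp only [Form.val, ihA]
  | all A ih => intro ρ; simp only [Form.val, ih]; congr 1; ext v; exact ⟨fun ⟨d, h⟩ => ⟨d, h.trans (ih _)⟩, fun ⟨d, h⟩ => ⟨d, h.trans (ih _).symm⟩⟩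
  | ex A ih => intro ρ; simp only [Form.val, ih]; congr 1; ext v; exact ⟨fun ⟨d, h⟩ => ⟨d, h.trans (ih _)⟩, fun ⟨d, h⟩ => ⟨d, h.trans (ih _).symm⟩⟩

/-- The collapsing map used in the glued interpretation. -/
noncomputable def hfun (ω x : ℝ) : ℝ := if x ≤ ω then x else 1

lemma hfun_mono {ω : ℝ} (hω1 : ω < 1) : Monotone (hfun ω) := by
  intro x y hxy
  unfold hfun
  split_ifs <;> linarith

lemma inf_image_hfun {ω : ℝ} (hω1 : ω < 1) {S : Set ℝ} (hsub : S ⊆ Vup) (hne : S.Nonempty) :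
    sInf (hfun ω '' S) = hfun ω (sInf S) := by
  have hmem : sInf S ∈ S := Vup_inf_mem hsub hne
  by_cases hc : sInf S ≤ ω
  · have h1 : hfun ω (sInf S) = sInf S := if_pos hc
    rw [h1]
    apply le_antisymm
    · have hbdd : BddBelow (hfun ω '' S) := by
        refine ⟨0, ?_⟩
        rintro y ⟨s, hs, rfl⟩
        unfold hfun; split_ifs
        exacts [(Vup_subset_Icc (hsub hs)).1, zero_le_one]
      exact csInf_le hbdd ⟨sInf S, hmem, h1⟩
    · refine le_csInf (hne.image _) ?_
      rintro y ⟨s, hs, rfl⟩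
      calc sInf S = hfun ω (sInf S) := h1.symm
        _ ≤ hfun ω s := hfun_mono hω1 (csInf_le (Vup_bddBelow hsub) hs)
  · have h1 : hfun ω (sInf S) = 1 := if_neg hc
    rw [h1]
    apply le_antisymm
    · exact csInf_le ⟨0, by rintro y ⟨s, hs, rfl⟩; unfold hfun; split_ifs; exacts [(Vup_subset_Icc (hsub hs)).1, zero_le_one]⟩ ⟨sInf S, hmem, h1⟩
    · refine le_csInf (hne.image _) ?_
      rintro y ⟨s, hs, rfl⟩
      have : ¬ s ≤ ω := fun h => hc ((csInf_le (Vup_bddBelow hsub) hs).trans h)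
      rw [hfun, if_neg this]

lemma sup_image_hfun {ω : ℝ} (hω1 : ω < 1) {S : Set ℝ} (hsub : S ⊆ Vup) (hne : S.Nonempty) :
    sSup (hfun ω '' S) = hfun ω (sSup S) := by
  by_cases hc : sSup S ≤ ω
  · have himg : hfun ω '' S = S := by
      ext x
      constructor
      · rintro ⟨s, hs, rfl⟩
        have : s ≤ ω := (le_csSup (Vup_bddAbove hsub) hs).trans hc
        rw [hfun, if_pos this]; exact hs
      · intro hx
        have : x ≤ ω := (le_csSup (Vup_bddAbove hsub) hx).trans hc
        exact ⟨x, hx, if_pos this⟩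
    rw [himg, hfun, if_pos hc]
  · have h1 : hfun ω (sSup S) = 1 := if_neg hc
    rw [h1]
    obtain ⟨s, hs, hsω⟩ := exists_lt_of_lt_csSup hne (not_le.mp hc)
    have hub : ∀ y ∈ hfun ω '' S, y ≤ 1 := by
      rintro y ⟨t, ht, rfl⟩
      unfold hfun; split_ifs with h
      · linarith
      · exact le_refl 1
    apply le_antisymm
    · exact csSup_le (hne.image _) hub
    · refine le_csSup ⟨1, hub⟩ ⟨s, hs, ?_⟩
      rw [hfun, if_neg (not_le.mpr hsω)]

lemma eval_glue {L : Lang} (I : Interp L Vup) (ω : ℝ) (h1 : (1:ℝ) ∈ Vup)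
    {α : Type} (v : α → I.Dom) (t : Term L α) :
    Term.eval (I.glue ω h1) v t = Term.eval I v t := by
  induction t with
  | var i => rfl
  | func f ts ih =>
    show I.funMap f _ = I.funMap f _
    congr 1
    funext j
    exact ih j

lemma val_glue {L : Lang} (I : Interp L Vup) (ω : ℝ) (hω0 : 0 ≤ ω) (hω1 : ω < 1)
    (h1 : (1:ℝ) ∈ Vup) :
    ∀ {n} (B : Form L n), DeltaFree B → ∀ (ρ : Fin n → I.Dom),
      Form.val (I.glue ω h1) B ρ = hfun ω (Form.val I B ρ) := by
  intro n B
  induction B with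
  | falsum =>
    intro _ ρ
    show (0:ℝ) = hfun ω 0
    rw [hfun, if_pos hω0]
  | atom R ts =>
    intro _ ρ
    simp only [Form.val]
    rw [show (fun j => Term.eval (I.glue ω h1) ρ (ts j)) = (fun j => Term.eval I ρ (ts j))
        from funext fun j => eval_glue I ω h1 ρ (ts j)]
    simp only [Interp.glue, hfun]
  | conj A B ihA ihB =>
    intro hB ρ
    obtain ⟨hA', hB'⟩ := hB
    simp only [Form.val, ihA hA', ihB hB']
    exact ((hfun_mono hω1).map_min).symm
  | disj A B ihA ihB =>
    intro hB ρ
    obtain ⟨hA', hB'⟩ := hB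
    simp only [Form.val, ihA hA', ihB hB']
    exact ((hfun_mono hω1).map_max).symm
  | impl A B ihA ihB =>
    intro hB ρ
    obtain ⟨hA', hB'⟩ := hB
    simp only [Form.val, ihA hA', ihB hB']
    unfold hfun
    split_ifs <;> linarith
  | delta A ihA =>
    intro hB ρ
    exact absurd hB (by simp [DeltaFree])
  | all A ih =>
    intro hB ρ
    have hA' : DeltaFree A := hB
    simp only [Form.val]
    have hdef : {v : ℝ | ∃ d : (I.glue ω h1).Dom, v = Form.val (I.glue ω h1) A (Fin.snoc ρ d)}
        = hfun ω '' {v : ℝ | ∃ d : I.Dom, v = Form.val I A (Fin.snoc ρ d)} := by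
      ext v
      constructor
      · rintro ⟨d, rfl⟩
        exact ⟨Form.val I A (Fin.snoc ρ d), ⟨d, rfl⟩, (ih hA' _).symm⟩
      · rintro ⟨x, ⟨d, rfl⟩, rfl⟩
        exact ⟨d, (ih hA' _).symm⟩
    rw [hdef]
    obtain ⟨d⟩ := I.dom_nonempty
    refine inf_image_hfun hω1 ?_ ⟨_, d, rfl⟩
    rintro v ⟨d', rfl⟩
    exact val_mem_Vup I A _
  | ex A ih =>
    intro hB ρ
    have hA' : DeltaFree A := hB
    simp only [Form.val]
    have hdef : {v : ℝ | ∃ d : (I.glue ω h1).Dom, v = Form.val (I.glue ω h1) A (Fin.snoc ρ d)}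
        = hfun ω '' {v : ℝ | ∃ d : I.Dom, v = Form.val I A (Fin.snoc ρ d)} := by
      ext v
      constructor
      · rintro ⟨d, rfl⟩
        exact ⟨Form.val I A (Fin.snoc ρ d), ⟨d, rfl⟩, (ih hA' _).symm⟩
      · rintro ⟨x, ⟨d, rfl⟩, rfl⟩
        exact ⟨d, (ih hA' _).symm⟩
    rw [hdef]
    obtain ⟨d⟩ := I.dom_nonempty
    refine sup_image_hfun hω1 ?_ ⟨_, d, rfl⟩
    rintro v ⟨d', rfl⟩
    exact val_mem_Vup I A _

lemma mem_Vfin_of_le {x : ℝ} (hx : x ∈ Vup) {k : ℕ} (hk : 1 ≤ k)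
    (hle : x ≤ 1 - 1/(k:ℝ)) : x ∈ Vfin (k+1) := by
  have hk0 : (0:ℝ) < k := by exact_mod_cast hk
  rcases hx with ⟨j, hj, rfl⟩ | rfl
  · have hj0 : (0:ℝ) < j := by exact_mod_cast hj
    have : (1:ℝ)/k ≤ 1/j := by linarith
    have hjk : (j:ℝ) ≤ k := (one_div_le_one_div hk0 hj0).mp this
    have hjk' : j ≤ k := by exact_mod_cast hjk
    exact Or.inl ⟨j, hj, by omega, rfl⟩
  · have : (0:ℝ) < 1/k := by positivity
    linarith

/-- `G_{V_↑}` is the intersection of all finite-valued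
first-order Gödel logics: a sentence is valid in `G_{V_↑}` iff it is valid in
`G_{V_m}` for every `m ≥ 2`. -/
theorem stmt_4 {L : Lang} (A : Form L 0) (hA : DeltaFree A) :
    Valid Vup A ↔ ∀ m : ℕ, 2 ≤ m → Valid (Vfin m) A := by
  constructor
  · intro hval m hm I
    have hmem : ∀ {k} (R : L.Rel k) (v : Fin k → I.Dom), I.relVal R v ∈ Vup :=
      fun R v => Vfin_subset_Vup m (I.relVal_mem R v)
    have := hval (I.retype Vup hmem)
    exact (val_retype I hmem A Fin.elim0).symm.trans this
  · intro hfin I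
    by_contra hne
    have hV : Form.sval I A ∈ Vup := val_mem_Vup I A Fin.elim0
    rcases hV with ⟨k, hk1, hωeq⟩ | h1
    · set ω := 1 - 1/(k:ℝ) with hωdef
      have hk0 : (0:ℝ) < k := by exact_mod_cast hk1
      have hinv : (0:ℝ) < 1/k := by positivity
      have hω1 : ω < 1 := by rw [hωdef]; linarith
      have hω0 : 0 ≤ ω := by
        have : (1:ℝ)/k ≤ 1 := by
          rw [div_le_one hk0]; exact_mod_cast hk1
        rw [hωdef]; linarith
      set J := I.glue ω one_mem_Vup with hJ
      have hJval : Form.sval J A = hfun ω (Form.sval I A) :=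
        val_glue I ω hω0 hω1 one_mem_Vup A hA Fin.elim0
      have hJval' : Form.sval J A = ω := by
        rw [hJval, hωeq, hfun, if_pos (le_refl ω)]
      have hrel : ∀ {k'} (R : L.Rel k') (v : Fin k' → J.Dom), J.relVal R v ∈ Vfin (k+1) := by
        intro k' R v
        show (if I.relVal R v ≤ ω then I.relVal R v else 1) ∈ Vfin (k+1)
        split_ifs with hc
        · exact mem_Vfin_of_le (I.relVal_mem R v) hk1 hc
        · exact Or.inr rfl
      have hK := hfin (k+1) (by omega) (J.retype (Vfin (k+1)) hrel)
      have hK' : Form.sval J A = 1 := (val_retype J hrel A Fin.elim0).symm.trans hK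
      rw [hJval'] at hK'
      linarith
    · exact hne h1


end GodelPaper
end

section
/- Let V be a Gödel set in which 0 is isolated (V ∩ (0,ε) = ∅ for some ε > 0). Then for every sentence A there exists a prenex sentence P such that ¬¬(A ↔ P) is valid in G_V; in particular every sentence admits a prenex normal form whose equivalence with it is >0-valid. -/
namespace GodelPaper

section Stmt8Aux

variable {L : Lang} {V : Set ℝ}

lemma snoc_comp_castSucc' {n : ℕ} {α : Type*} (ρ : Fin n → α) (d : α) :
    (Fin.snoc ρ d : Fin (n+1) → α) ∘ Fin.castSucc = ρ := by
  funext i; simp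

lemma snoc_comp_lastCases {m n : ℕ} {α : Type*} (f : Fin m → Fin n) (ρ : Fin n → α) (d : α) :
    ((Fin.snoc ρ d : Fin (n+1) → α) ∘
      (Fin.lastCases (Fin.last n) fun i => Fin.castSucc (f i) : Fin (m+1) → Fin (n+1))) =
      Fin.snoc (ρ ∘ f) d := by
  funext i
  induction i using Fin.lastCases with
  | last => simp
  | cast i => simp

/-- Classical truth of a formula: an atom counts as true iff its value is nonzero. -/
def Form.cval (I : Interp L V) : ∀ {n}, Form L n → (Fin n → I.Dom) → Prop
  | _, .falsum, _ => False
  | _, .atom R ts, ρ => ¬ (I.relVal R (fun j => Term.eval I ρ (ts j)) = 0)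
  | _, .conj A B, ρ => Form.cval I A ρ ∧ Form.cval I B ρ
  | _, .disj A B, ρ => Form.cval I A ρ ∨ Form.cval I B ρ
  | _, .impl A B, ρ => Form.cval I A ρ → Form.cval I B ρ
  | _, .delta A, ρ => Form.cval I A ρ
  | _, .all A, ρ => ∀ d, Form.cval I A (Fin.snoc ρ d)
  | _, .ex A, ρ => ∃ d, Form.cval I A (Fin.snoc ρ d)

lemma Term.eval_rename' (I : Interp L V) {m n : ℕ} (f : Fin m → Fin n) (ρ : Fin n → I.Dom) :
    ∀ t : Term L (Fin m), Term.eval I ρ (Term.rename f t) = Term.eval I (ρ ∘ f) t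
  | .var i => rfl
  | .func g ts => by
      simp only [Term.rename, Term.eval]
      congr 1
      funext j
      exact Term.eval_rename' I f ρ (ts j)

lemma cval_rename (I : Interp L V) {m : ℕ} (A : Form L m) :
    ∀ {n : ℕ} (f : Fin m → Fin n) (ρ : Fin n → I.Dom),
      Form.cval I (Form.rename f A) ρ ↔ Form.cval I A (ρ ∘ f) := by
  induction A with
  | falsum => intro n f ρ; exact Iff.rfl
  | atom R ts =>
      intro n f ρ
      simp only [Form.rename, Form.cval]
      rw [show (fun j => Term.eval I ρ (Term.rename f (ts j)))
            = fun j => Term.eval I (ρ ∘ f) (ts j) from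
          funext fun j => Term.eval_rename' I f ρ (ts j)]
  | conj A B ihA ihB => intro n f ρ; simp only [Form.rename, Form.cval, ihA, ihB]
  | disj A B ihA ihB => intro n f ρ; simp only [Form.rename, Form.cval, ihA, ihB]
  | impl A B ihA ihB => intro n f ρ; simp only [Form.rename, Form.cval, ihA, ihB]
  | delta A ih => intro n f ρ; simp only [Form.rename, Form.cval, ih]
  | all A ih =>
      intro n f ρ
      simp only [Form.rename, Form.cval]
      refine forall_congr' fun d => ?_
      rw [ih, snoc_comp_lastCases]
  | ex A ih =>
      intro n f ρ
      simp only [Form.rename, Form.cval]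
      refine exists_congr fun d => ?_
      rw [ih, snoc_comp_lastCases]

lemma cval_lift (I : Interp L V) {n : ℕ} (A : Form L n) (ρ : Fin n → I.Dom) (d : I.Dom) :
    Form.cval I (Form.lift A) (Fin.snoc ρ d) ↔ Form.cval I A ρ := by
  rw [Form.lift, cval_rename, snoc_comp_castSucc']


lemma prop_conj (p q : Prop) : ((p → (q → False)) → False) ↔ p ∧ q := by tauto

lemma prop_disj (p q : Prop) : ((p → False) → q) ↔ p ∨ q := by tauto

lemma quantFree_falsum {n : ℕ} : QuantFree (Form.falsum : Form L n) := by simp [QuantFree]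

lemma deltaFree_falsum {n : ℕ} : DeltaFree (Form.falsum : Form L n) := by simp [DeltaFree]

lemma quantFree_rename {m : ℕ} (A : Form L m) (h : QuantFree A) :
    ∀ {n : ℕ} (f : Fin m → Fin n), QuantFree (Form.rename f A) := by
  induction A with
  | falsum => intro n f; trivial
  | atom R ts => intro n f; trivial
  | conj A B ihA ihB => intro n f; exact ⟨ihA h.1 f, ihB h.2 f⟩
  | disj A B ihA ihB => intro n f; exact ⟨ihA h.1 f, ihB h.2 f⟩
  | impl A B ihA ihB => intro n f; exact ⟨ihA h.1 f, ihB h.2 f⟩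
  | delta A ih => intro n f; exact ih h f
  | all A ih => exact h.elim
  | ex A ih => exact h.elim

lemma deltaFree_rename {m : ℕ} (A : Form L m) (h : DeltaFree A) :
    ∀ {n : ℕ} (f : Fin m → Fin n), DeltaFree (Form.rename f A) := by
  induction A with
  | falsum => intro n f; trivial
  | atom R ts => intro n f; trivial
  | conj A B ihA ihB => intro n f; exact ⟨ihA h.1 f, ihB h.2 f⟩
  | disj A B ihA ihB => intro n f; exact ⟨ihA h.1 f, ihB h.2 f⟩
  | impl A B ihA ihB => intro n f; exact ⟨ihA h.1 f, ihB h.2 f⟩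
  | delta A ih => exact h.elim
  | all A ih => intro n f; exact ih h _
  | ex A ih => intro n f; exact ih h _

lemma isPrenex_rename {m : ℕ} {A : Form L m} (h : IsPrenex A) :
    ∀ {n : ℕ} (f : Fin m → Fin n), IsPrenex (Form.rename f A) := by
  induction h with
  | qf hq => intro n f; exact IsPrenex.qf (quantFree_rename _ hq f)
  | all h ih => intro n f; exact IsPrenex.all (ih _)
  | ex h ih => intro n f; exact IsPrenex.ex (ih _)

lemma val_mem (hV : GodelSet V) (I : Interp L V) {n : ℕ} (A : Form L n) :
    ∀ ρ : Fin n → I.Dom, Form.val I A ρ ∈ V := by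
  obtain ⟨hcl, hsub, h0, h1⟩ := hV
  induction A with
  | falsum => intro ρ; exact h0
  | atom R ts => intro ρ; exact I.relVal_mem _ _
  | conj A B ihA ihB =>
      intro ρ
      simp only [Form.val]
      rcases min_cases (Form.val I A ρ) (Form.val I B ρ) with ⟨h, _⟩ | ⟨h, _⟩ <;>
        rw [h] <;> [exact ihA ρ; exact ihB ρ]
  | disj A B ihA ihB =>
      intro ρ
      simp only [Form.val]
      rcases max_cases (Form.val I A ρ) (Form.val I B ρ) with ⟨h, _⟩ | ⟨h, _⟩ <;>
        rw [h] <;> [exact ihA ρ; exact ihB ρ]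
  | impl A B ihA ihB =>
      intro ρ
      simp only [Form.val]
      split <;> [exact h1; exact ihB ρ]
  | delta A ih =>
      intro ρ
      simp only [Form.val]
      split <;> [exact h1; exact h0]
  | all A ih =>
      intro ρ
      simp only [Form.val]
      obtain ⟨d0⟩ := I.dom_nonempty
      have hne : Set.Nonempty {v : ℝ | ∃ d, v = Form.val I A (Fin.snoc ρ d)} := ⟨_, d0, rfl⟩
      have hSV : {v : ℝ | ∃ d, v = Form.val I A (Fin.snoc ρ d)} ⊆ V := by
        rintro x ⟨d, rfl⟩; exact ih _
      have hbdd : BddBelow {v : ℝ | ∃ d, v = Form.val I A (Fin.snoc ρ d)} :=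
        ⟨0, by rintro x ⟨d, rfl⟩; exact (hsub (ih _)).1⟩
      have := csInf_mem_closure hne hbdd
      have h2 := closure_mono hSV this
      rwa [hcl.closure_eq] at h2
  | ex A ih =>
      intro ρ
      simp only [Form.val]
      obtain ⟨d0⟩ := I.dom_nonempty
      have hne : Set.Nonempty {v : ℝ | ∃ d, v = Form.val I A (Fin.snoc ρ d)} := ⟨_, d0, rfl⟩
      have hSV : {v : ℝ | ∃ d, v = Form.val I A (Fin.snoc ρ d)} ⊆ V := by
        rintro x ⟨d, rfl⟩; exact ih _
      have hbdd : BddAbove {v : ℝ | ∃ d, v = Form.val I A (Fin.snoc ρ d)} :=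
        ⟨1, by rintro x ⟨d, rfl⟩; exact (hsub (ih _)).2⟩
      have := csSup_mem_closure hne hbdd
      have h2 := closure_mono hSV this
      rwa [hcl.closure_eq] at h2

lemma val_nonneg (hV : GodelSet V) (I : Interp L V) {n : ℕ} (A : Form L n) (ρ : Fin n → I.Dom) :
    0 ≤ Form.val I A ρ := (hV.2.1 (val_mem hV I A ρ)).1

lemma val_le_one (hV : GodelSet V) (I : Interp L V) {n : ℕ} (A : Form L n) (ρ : Fin n → I.Dom) :
    Form.val I A ρ ≤ 1 := (hV.2.1 (val_mem hV I A ρ)).2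

lemma val_eq_zero_iff (hV : GodelSet V) {ε : ℝ} (hε : 0 < ε) (hiso : V ∩ Set.Ioo 0 ε = ∅)
    (I : Interp L V) {n : ℕ} (A : Form L n) :
    ∀ (_ : DeltaFree A) (ρ : Fin n → I.Dom), (Form.val I A ρ = 0 ↔ ¬ Form.cval I A ρ) := by
  have small : ∀ x ∈ V, x < ε → x = 0 := by
    intro x hx hlt
    by_contra hne
    have hx0 : 0 < x := lt_of_le_of_ne (hV.2.1 hx).1 (Ne.symm hne)
    have hmem : x ∈ V ∩ Set.Ioo 0 ε := ⟨hx, hx0, hlt⟩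
    rw [hiso] at hmem
    exact hmem
  induction A with
  | falsum =>
      intro _ ρ
      simp [Form.val, Form.cval]
  | atom R ts =>
      intro _ ρ
      simp only [Form.val, Form.cval]
      exact not_not.symm
  | conj A B ihA ihB =>
      intro hD ρ
      have hA' := ihA hD.1 ρ
      have hB' := ihB hD.2 ρ
      have ha := val_nonneg hV I A ρ
      have hb := val_nonneg hV I B ρ
      simp only [Form.val, Form.cval]
      have hmin : min (Form.val I A ρ) (Form.val I B ρ) = 0 ↔
          (Form.val I A ρ = 0 ∨ Form.val I B ρ = 0) := by
        constructor
        · intro h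
          rcases le_total (Form.val I A ρ) (Form.val I B ρ) with hh | hh
          · left; rwa [min_eq_left hh] at h
          · right; rwa [min_eq_right hh] at h
        · rintro (h | h)
          · exact le_antisymm ((min_le_left _ _).trans h.le) (le_min ha hb)
          · exact le_antisymm ((min_le_right _ _).trans h.le) (le_min ha hb)
      rw [hmin, hA', hB']
      exact not_and_or.symm
  | disj A B ihA ihB =>
      intro hD ρ
      have hA' := ihA hD.1 ρ
      have hB' := ihB hD.2 ρ
      have ha := val_nonneg hV I A ρ
      have hb := val_nonneg hV I B ρ
      simp only [Form.val, Form.cval]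
      have hmax : max (Form.val I A ρ) (Form.val I B ρ) = 0 ↔
          (Form.val I A ρ = 0 ∧ Form.val I B ρ = 0) := by
        constructor
        · intro h
          exact ⟨le_antisymm (h ▸ le_max_left _ _) ha, le_antisymm (h ▸ le_max_right _ _) hb⟩
        · rintro ⟨h1, h2⟩
          rw [h1, h2]; exact max_self 0
      rw [hmax, hA', hB']
      exact not_or.symm
  | impl A B ihA ihB =>
      intro hD ρ
      have hA' := ihA hD.1 ρ
      have hB' := ihB hD.2 ρ
      have ha := val_nonneg hV I A ρ
      have hb := val_nonneg hV I B ρ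
      simp only [Form.val, Form.cval]
      split_ifs with hle
      · have himp : Form.cval I A ρ → Form.cval I B ρ := by
          intro hca
          by_contra hcb
          have hb0 := hB'.mpr hcb
          have ha0 : Form.val I A ρ = 0 := le_antisymm (hb0 ▸ hle) ha
          exact (hA'.mp ha0) hca
        exact iff_of_false one_ne_zero (not_not_intro himp)
      · have hca : Form.cval I A ρ := by
          by_contra h
          exact hle ((hA'.mpr h) ▸ hb)
        rw [hB']
        exact not_congr ⟨fun hb _ => hb, fun f => f hca⟩
  | delta A ih => intro hD; exact absurd hD (by simp [DeltaFree])
  | all A ih =>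
      intro hD ρ
      simp only [Form.val, Form.cval]
      obtain ⟨d0⟩ := I.dom_nonempty
      have hne : Set.Nonempty {v : ℝ | ∃ d, v = Form.val I A (Fin.snoc ρ d)} := ⟨_, d0, rfl⟩
      have hbdd : BddBelow {v : ℝ | ∃ d, v = Form.val I A (Fin.snoc ρ d)} :=
        ⟨0, by rintro x ⟨d, rfl⟩; exact val_nonneg hV I A _⟩
      constructor
      · intro h hforall
        have hlt : sInf {v : ℝ | ∃ d, v = Form.val I A (Fin.snoc ρ d)} < ε := by
          rw [h]; exact hε
        obtain ⟨x, hxS, hxlt⟩ := exists_lt_of_csInf_lt hne hlt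
        obtain ⟨d, rfl⟩ := hxS
        have hx0 : Form.val I A (Fin.snoc ρ d) = 0 := small _ (val_mem hV I A _) hxlt
        exact (ih hD _).mp hx0 (hforall d)
      · intro hnall
        obtain ⟨d, hd⟩ := Classical.not_forall.mp hnall
        have h0' : Form.val I A (Fin.snoc ρ d) = 0 := (ih hD _).mpr hd
        refine le_antisymm (h0' ▸ csInf_le hbdd ⟨d, rfl⟩) (le_csInf hne ?_)
        rintro x ⟨d', rfl⟩
        exact val_nonneg hV I A _
  | ex A ih =>
      intro hD ρ
      simp only [Form.val, Form.cval]
      obtain ⟨d0⟩ := I.dom_nonempty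
      have hne : Set.Nonempty {v : ℝ | ∃ d, v = Form.val I A (Fin.snoc ρ d)} := ⟨_, d0, rfl⟩
      have hbdd : BddAbove {v : ℝ | ∃ d, v = Form.val I A (Fin.snoc ρ d)} :=
        ⟨1, by rintro x ⟨d, rfl⟩; exact val_le_one hV I A _⟩
      constructor
      · rintro h ⟨d, hd⟩
        have hle : Form.val I A (Fin.snoc ρ d) ≤ 0 := h ▸ le_csSup hbdd ⟨d, rfl⟩
        exact (ih hD _).mp (le_antisymm hle (val_nonneg hV I A _)) hd
      · intro hnex
        refine le_antisymm (csSup_le hne ?_) ((val_nonneg hV I A (Fin.snoc ρ d0)).trans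
          (le_csSup hbdd ⟨d0, rfl⟩))
        rintro x ⟨d, rfl⟩
        exact le_of_eq ((ih hD _).mpr fun hc => hnex ⟨d, hc⟩)

lemma combine_impl_qf {n : ℕ} {B : Form L n} (hB : IsPrenex B) :
    ∀ (A : Form L n), QuantFree A → DeltaFree A → DeltaFree B →
    ∃ C : Form L n, IsPrenex C ∧ DeltaFree C ∧
      ∀ {V' : Set ℝ} (I : Interp L V') (ρ : Fin n → I.Dom),
        Form.cval I C ρ ↔ (Form.cval I A ρ → Form.cval I B ρ) := by
  induction hB with
  | @qf m B hq =>
      intro A hqA hdA hdB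
      refine ⟨Form.impl A B, IsPrenex.qf (by simp [QuantFree]; exact ⟨hqA, hq⟩),
        by simp [DeltaFree]; exact ⟨hdA, hdB⟩, fun I ρ => Iff.rfl⟩
  | @all m B' hB' ih =>
      intro A hqA hdA hdB
      obtain ⟨C, hC1, hC2, hC3⟩ := ih (Form.lift A) (quantFree_rename _ hqA _)
        (deltaFree_rename _ hdA _) hdB
      refine ⟨Form.all C, IsPrenex.all hC1, hC2, fun I ρ => ?_⟩
      simp only [Form.cval]
      constructor
      · intro h hca d
        exact (hC3 I _).mp (h d) ((cval_lift I A ρ d).mpr hca)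
      · intro h d
        exact (hC3 I _).mpr fun hlift => h ((cval_lift I A ρ d).mp hlift) d
  | @ex m B' hB' ih =>
      intro A hqA hdA hdB
      obtain ⟨C, hC1, hC2, hC3⟩ := ih (Form.lift A) (quantFree_rename _ hqA _)
        (deltaFree_rename _ hdA _) hdB
      refine ⟨Form.ex C, IsPrenex.ex hC1, hC2, fun I ρ => ?_⟩
      simp only [Form.cval]
      obtain ⟨d0⟩ := I.dom_nonempty
      constructor
      · rintro ⟨d, hd⟩ hca
        exact ⟨d, (hC3 I _).mp hd ((cval_lift I A ρ d).mpr hca)⟩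
      · intro h
        by_cases hca : Form.cval I A ρ
        · obtain ⟨d, hd⟩ := h hca
          exact ⟨d, (hC3 I _).mpr fun _ => hd⟩
        · exact ⟨d0, (hC3 I _).mpr fun hlift => absurd ((cval_lift I A ρ d0).mp hlift) hca⟩

lemma combine_impl {n : ℕ} {A : Form L n} (hA : IsPrenex A) :
    ∀ (B : Form L n), IsPrenex B → DeltaFree A → DeltaFree B →
    ∃ C : Form L n, IsPrenex C ∧ DeltaFree C ∧
      ∀ {V' : Set ℝ} (I : Interp L V') (ρ : Fin n → I.Dom),
        Form.cval I C ρ ↔ (Form.cval I A ρ → Form.cval I B ρ) := by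
  induction hA with
  | @qf m A hq =>
      intro B hB hdA hdB
      exact combine_impl_qf hB A hq hdA hdB
  | @all m A' hA' ih =>
      intro B hB hdA hdB
      obtain ⟨C, hC1, hC2, hC3⟩ := ih (Form.lift B) (isPrenex_rename hB _) hdA
        (deltaFree_rename _ hdB _)
      refine ⟨Form.ex C, IsPrenex.ex hC1, hC2, fun I ρ => ?_⟩
      simp only [Form.cval]
      obtain ⟨d0⟩ := I.dom_nonempty
      constructor
      · rintro ⟨d, hd⟩ hall
        exact (cval_lift I B ρ d).mp ((hC3 I _).mp hd (hall d))
      · intro h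
        by_cases hall : ∀ d, Form.cval I A' (Fin.snoc ρ d)
        · exact ⟨d0, (hC3 I _).mpr fun _ => (cval_lift I B ρ d0).mpr (h hall)⟩
        · obtain ⟨d, hd⟩ := Classical.not_forall.mp hall
          exact ⟨d, (hC3 I _).mpr fun hca => absurd hca hd⟩
  | @ex m A' hA' ih =>
      intro B hB hdA hdB
      obtain ⟨C, hC1, hC2, hC3⟩ := ih (Form.lift B) (isPrenex_rename hB _) hdA
        (deltaFree_rename _ hdB _)
      refine ⟨Form.all C, IsPrenex.all hC1, hC2, fun I ρ => ?_⟩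
      simp only [Form.cval]
      constructor
      · rintro h ⟨d, hd⟩
        exact (cval_lift I B ρ d).mp ((hC3 I _).mp (h d) hd)
      · intro h d
        exact (hC3 I _).mpr fun hca => (cval_lift I B ρ d).mpr (h ⟨d, hca⟩)

lemma prenexize {n : ℕ} (A : Form L n) (hD : DeltaFree A) :
    ∃ P : Form L n, IsPrenex P ∧ DeltaFree P ∧
      ∀ {V' : Set ℝ} (I : Interp L V') (ρ : Fin n → I.Dom),
        Form.cval I P ρ ↔ Form.cval I A ρ := by
  induction A with
  | falsum =>
      refine ⟨Form.falsum, IsPrenex.qf quantFree_falsum, deltaFree_falsum, fun I ρ => Iff.rfl⟩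
  | atom R ts =>
      refine ⟨Form.atom R ts, IsPrenex.qf (by simp [QuantFree]), by simp [DeltaFree],
        fun I ρ => Iff.rfl⟩
  | @conj m A B ihA ihB =>
      obtain ⟨PA, hPA1, hPA2, hPA3⟩ := ihA hD.1
      obtain ⟨PB, hPB1, hPB2, hPB3⟩ := ihB hD.2
      have hfal : IsPrenex (Form.falsum : Form L m) := IsPrenex.qf quantFree_falsum
      obtain ⟨D1, hD11, hD12, hD13⟩ := combine_impl hPB1 Form.falsum hfal hPB2 deltaFree_falsum
      obtain ⟨D2, hD21, hD22, hD23⟩ := combine_impl hPA1 D1 hD11 hPA2 hD12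
      obtain ⟨D3, hD31, hD32, hD33⟩ := combine_impl hD21 Form.falsum hfal hD22 deltaFree_falsum
      refine ⟨D3, hD31, hD32, fun I ρ => ?_⟩
      have h1 := hD13 I ρ
      have h2 := hD23 I ρ
      have h3 := hD33 I ρ
      have hA' := hPA3 I ρ
      have hB' := hPB3 I ρ
      simp only [Form.cval] at h1 h2 h3 ⊢
      rw [h3, h2, h1, hA', hB']
      exact prop_conj _ _
  | @disj m A B ihA ihB =>
      obtain ⟨PA, hPA1, hPA2, hPA3⟩ := ihA hD.1
      obtain ⟨PB, hPB1, hPB2, hPB3⟩ := ihB hD.2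
      have hfal : IsPrenex (Form.falsum : Form L m) := IsPrenex.qf quantFree_falsum
      obtain ⟨D1, hD11, hD12, hD13⟩ := combine_impl hPA1 Form.falsum hfal hPA2 deltaFree_falsum
      obtain ⟨D2, hD21, hD22, hD23⟩ := combine_impl hD11 PB hPB1 hD12 hPB2
      refine ⟨D2, hD21, hD22, fun I ρ => ?_⟩
      have h1 := hD13 I ρ
      have h2 := hD23 I ρ
      have hA' := hPA3 I ρ
      have hB' := hPB3 I ρ
      simp only [Form.cval] at h1 h2 ⊢
      rw [h2, h1, hA', hB']
      exact prop_disj _ _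
  | impl A B ihA ihB =>
      obtain ⟨PA, hPA1, hPA2, hPA3⟩ := ihA hD.1
      obtain ⟨PB, hPB1, hPB2, hPB3⟩ := ihB hD.2
      obtain ⟨C, hC1, hC2, hC3⟩ := combine_impl hPA1 PB hPB1 hPA2 hPB2
      refine ⟨C, hC1, hC2, fun I ρ => ?_⟩
      have h1 := hC3 I ρ
      have hA' := hPA3 I ρ
      have hB' := hPB3 I ρ
      simp only [Form.cval] at h1 ⊢
      rw [h1, hA', hB']
  | delta A ih => exact absurd hD (by simp [DeltaFree])
  | all A ih =>
      obtain ⟨P, hP1, hP2, hP3⟩ := ih hD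
      refine ⟨Form.all P, IsPrenex.all hP1, hP2, fun I ρ => ?_⟩
      simp only [Form.cval]
      exact forall_congr' fun d => hP3 I _
  | ex A ih =>
      obtain ⟨P, hP1, hP2, hP3⟩ := ih hD
      refine ⟨Form.ex P, IsPrenex.ex hP1, hP2, fun I ρ => ?_⟩
      simp only [Form.cval]
      exact exists_congr fun d => hP3 I _

end Stmt8Aux

/-- If 0 is isolated in the Gödel set `V`, then every sentence
`A` has a prenex sentence `P` such that `¬¬(A ↔ P)` is valid in `G_V`
(a prenex normal form whose equivalence with `A` is >0-valid). -/
theorem stmt_8 {L : Lang} {V : Set ℝ} (hV : GodelSet V)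
    (h0 : ∃ ε > (0:ℝ), V ∩ Set.Ioo 0 ε = ∅) (A : Form L 0) (hA : DeltaFree A) :
    ∃ P : Form L 0, IsPrenex P ∧ DeltaFree P ∧
      Valid V (Form.not (Form.not (Form.iff A P))) := by
  obtain ⟨ε, hε, hiso⟩ := h0
  obtain ⟨P, hP1, hP2, hP3⟩ := prenexize A hA
  refine ⟨P, hP1, hP2, fun I => ?_⟩
  have hzA := val_eq_zero_iff hV hε hiso I A hA Fin.elim0
  have hzP := val_eq_zero_iff hV hε hiso I P hP2 Fin.elim0
  have hiffc := hP3 I Fin.elim0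
  have hzz : Form.val I A Fin.elim0 = 0 ↔ Form.val I P Fin.elim0 = 0 := by
    rw [hzA, hzP, hiffc]
  have ha0 : 0 ≤ Form.val I A Fin.elim0 := val_nonneg hV I A _
  have hp0 : 0 ≤ Form.val I P Fin.elim0 := val_nonneg hV I P _
  have ha1 : Form.val I A Fin.elim0 ≤ 1 := val_le_one hV I A _
  have hp1 : Form.val I P Fin.elim0 ≤ 1 := val_le_one hV I P _
  set a := Form.val I A Fin.elim0 with hadef
  set p := Form.val I P Fin.elim0 with hpdef
  have hy : min (if a ≤ p then (1:ℝ) else p) (if p ≤ a then (1:ℝ) else a) ≠ 0 := by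
    rcases le_total a p with h1 | h1
    · by_cases h2 : p ≤ a
      · rw [if_pos h1, if_pos h2]
        simp
      · rw [if_pos h1, if_neg h2, min_eq_right ha1]
        intro h
        exact h2 (le_of_eq ((hzz.mp h).trans h.symm))
    · by_cases h2 : a ≤ p
      · rw [if_pos h2]
        split <;> simp
      · rw [if_neg h2, if_pos h1, min_eq_left hp1]
        intro h
        exact h2 (le_of_eq ((hzz.mpr h).trans h.symm))
  have hy0 : 0 ≤ min (if a ≤ p then (1:ℝ) else p) (if p ≤ a then (1:ℝ) else a) := by
    refine le_min ?_ ?_ <;> split <;> first | exact zero_le_one | assumption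
  have hylt : ¬ (min (if a ≤ p then (1:ℝ) else p) (if p ≤ a then (1:ℝ) else a) ≤ 0) :=
    fun h => hy (le_antisymm h hy0)
  show Form.val I _ Fin.elim0 = 1
  simp only [Form.not, Form.iff, Form.val, ← hadef, ← hpdef]
  rw [if_neg hylt]
  simp

end GodelPaper
end
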